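/- arXiv:1910.07420 — 2 statements merged into one kernel-verified Lean document; each statement's English description precedes it below -/
import Mathlib

section
/- Let $A, B \in [0,1]$ with $A + B \le 1$, let $d \ge 2$ and $1 \le \tau \le d-1$. Define $C = 1 - (1-A)^{d-1} + \sum_{i=0}^{\tau-1} \binom{d-1}{i} B^i (1-A-B)^{d-1-i}$ and $D = \sum_{j=\tau}^{d-1} \binom{d-1}{j} A^j (1-A-B)^{d-1-j}$. Then $0 \le D \le C$. -/
theorem stmt_3 (A B : ℝ) (hA : A ∈ Set.Icc (0:ℝ) 1) (hB : B ∈ Set.Icc (0:ℝ) 1)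
    (hAB : A + B ≤ 1) (d τ : ℕ) (hd : 2 ≤ d) (hτ : 1 ≤ τ) (hτ' : τ ≤ d - 1)
    (C D : ℝ)
    (hC : C = 1 - (1 - A) ^ (d - 1) + ∑ i ∈ Finset.range τ,
      (Nat.choose (d - 1) i : ℝ) * B ^ i * (1 - A - B) ^ (d - 1 - i))
    (hD : D = ∑ j ∈ Finset.Icc τ (d - 1),
      (Nat.choose (d - 1) j : ℝ) * A ^ j * (1 - A - B) ^ (d - 1 - j)) :
    0 ≤ D ∧ D ≤ C := by
  obtain ⟨hA0, hA1⟩ := hA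
  obtain ⟨hB0, hB1⟩ := hB
  set n := d - 1 with hn
  have hx0 : (0:ℝ) ≤ 1 - A - B := by linarith
  have hD0 : 0 ≤ D := by
    rw [hD]
    apply Finset.sum_nonneg
    intro j _
    positivity
  refine ⟨hD0, ?_⟩
  have hbin : ∀ a b : ℝ, (a + b) ^ n =
      ∑ i ∈ Finset.range (n + 1), (n.choose i : ℝ) * a ^ i * b ^ (n - i) := by
    intro a b
    rw [add_pow]
    exact Finset.sum_congr rfl fun i _ => by ring
  have hsplit : ∀ a : ℝ,
      ∑ i ∈ Finset.range (n + 1), (n.choose i : ℝ) * a ^ i * (1 - A - B) ^ (n - i) =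
      (∑ i ∈ Finset.range τ, (n.choose i : ℝ) * a ^ i * (1 - A - B) ^ (n - i)) +
      ∑ i ∈ Finset.Icc τ n, (n.choose i : ℝ) * a ^ i * (1 - A - B) ^ (n - i) := by
    intro a
    rw [Finset.range_eq_Ico, ← Finset.sum_Ico_consecutive _ (Nat.zero_le τ)
      (by omega : τ ≤ n + 1), Finset.Ico_add_one_right_eq_Icc, Finset.range_eq_Ico]
  -- C = 1 - S where S is the tail sum in B
  have hCeq : C = 1 - ∑ i ∈ Finset.Icc τ n,
      (n.choose i : ℝ) * B ^ i * (1 - A - B) ^ (n - i) := by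
    have h1 : (1 - A) ^ n = ∑ i ∈ Finset.range (n + 1),
        (n.choose i : ℝ) * B ^ i * (1 - A - B) ^ (n - i) := by
      rw [← hbin]; ring_nf
    rw [hC, h1, hsplit]
    ring
  rw [hCeq, hD]
  have key : (∑ j ∈ Finset.Icc τ n, (n.choose j : ℝ) * A ^ j * (1 - A - B) ^ (n - j)) +
      (∑ i ∈ Finset.Icc τ n, (n.choose i : ℝ) * B ^ i * (1 - A - B) ^ (n - i)) ≤ 1 := by
    rw [← Finset.sum_add_distrib]
    have h2 : ∑ j ∈ Finset.Icc τ n,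
        ((n.choose j : ℝ) * A ^ j * (1 - A - B) ^ (n - j)
          + (n.choose j : ℝ) * B ^ j * (1 - A - B) ^ (n - j)) ≤
        ∑ j ∈ Finset.Icc τ n, (n.choose j : ℝ) * (A + B) ^ j * (1 - A - B) ^ (n - j) := by
      apply Finset.sum_le_sum
      intro j hj
      have hj1 : j ≠ 0 := by
        simp only [Finset.mem_Icc] at hj
        omega
      have h3 : A ^ j + B ^ j ≤ (A + B) ^ j := pow_add_pow_le hA0 hB0 hj1
      have h4 : (0:ℝ) ≤ (n.choose j : ℝ) * (1 - A - B) ^ (n - j) := by positivity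
      nlinarith [h4]
    have h5 : ∑ j ∈ Finset.Icc τ n, (n.choose j : ℝ) * (A + B) ^ j * (1 - A - B) ^ (n - j) ≤
        ∑ j ∈ Finset.range (n + 1), (n.choose j : ℝ) * (A + B) ^ j * (1 - A - B) ^ (n - j) := by
      apply Finset.sum_le_sum_of_subset_of_nonneg
      · intro x hx
        simp only [Finset.mem_Icc] at hx
        simp only [Finset.mem_range]
        omega
      · intro i _ _
        positivity
    have h6 : ∑ j ∈ Finset.range (n + 1),
        (n.choose j : ℝ) * (A + B) ^ j * (1 - A - B) ^ (n - j) = 1 := by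
      rw [← hbin]
      norm_num
    linarith
  linarith
end

section
/- Let $n \ge 1$, let $f : \{0,1\}^{n-1} \to \{0,1\}$ be any Boolean function, and define $\mathcal{V}(b_1,\ldots,b_n) = (f(b_1,\ldots,b_{n-1}) \wedge f_{even}(b_1,\ldots,b_n)) \vee f_{odd}(b_1,\ldots,b_n)$, where $f_{even}$ (resp. $f_{odd}$) indicates even (resp. odd) parity of $\sum_{i=1}^n b_i$. Then the set $\mathcal{M} = \{B : \mathcal{V}(B)=1\}$ satisfies: $|\mathcal{M}| > 2^{n-1}$ if and only if there exists $(b_1,\ldots,b_{n-1})$ with $f(b_1,\ldots,b_{n-1}) = 1$. -/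
theorem stmt_6 (n : ℕ) (hn : 1 ≤ n) (f : (Fin (n - 1) → ZMod 2) → Bool)
    (V : (Fin n → ZMod 2) → Bool)
    (hV : ∀ b : Fin n → ZMod 2,
      V b = ((f (fun i => b (Fin.castLE (Nat.sub_le n 1) i)) && decide ((∑ i, b i) = 0))
             || decide ((∑ i, b i) = 1))) :
    Fintype.card {B : Fin n → ZMod 2 // V B = true} > 2 ^ (n - 1)
      ↔ ∃ b : Fin (n - 1) → ZMod 2, f b = true := by
  obtain ⟨m, rfl⟩ : ∃ m, n = m + 1 := ⟨n - 1, (Nat.succ_pred_eq_of_pos hn).symm⟩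
  have e1 : {B : Fin (m+1) → ZMod 2 // V B = true} ≃
      {p : (Fin m → ZMod 2) × ZMod 2 //
        ((f p.1 && decide (p.2 = 0)) || decide (p.2 = 1)) = true} := by
    refine Equiv.subtypeEquiv ⟨fun b => (fun i => b i.castSucc, ∑ i, b i),
      fun p => Fin.snoc p.1 (p.2 - ∑ i, p.1 i), ?_, ?_⟩ ?_
    · intro b
      simp only [Fin.sum_univ_castSucc]
      have : (∑ i : Fin m, b (Fin.castSucc i)) + b (Fin.last m) - ∑ i : Fin m, b (Fin.castSucc i) = b (Fin.last m) := by
        ring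
      rw [this]
      exact Fin.snoc_init_self b
    · intro p
      ext i
      · simp [Fin.init_snoc]
      · simp only [Fin.sum_univ_castSucc, Fin.snoc_castSucc, Fin.snoc_last]
        ring
    · intro b
      rw [hV b]
      rfl
  rw [Fintype.card_congr e1]
  have hcard : Fintype.card {p : (Fin m → ZMod 2) × ZMod 2 //
        ((f p.1 && decide (p.2 = 0)) || decide (p.2 = 1)) = true}
      = Fintype.card {c : Fin m → ZMod 2 // f c = true} + 2 ^ m := by
    rw [Fintype.card_subtype, Fintype.card_subtype]
    rw [Finset.card_eq_sum_ones, Finset.sum_filter, Fintype.sum_prod_type]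
    have hz : ∀ (g : ZMod 2 → ℕ), ∑ s : ZMod 2, g s = g 0 + g 1 := fun g => by
      show ∑ s : Fin 2, g s = _
      exact Fin.sum_univ_two (f := g)
    simp only [hz]
    simp only [show ((0:ZMod 2) = 1) ↔ False from by decide,
      show ((1:ZMod 2) = 0) ↔ False from by decide, decide_false, decide_true,
      Bool.and_false, Bool.and_true, Bool.false_or, Bool.or_true, if_true]
    rw [Finset.sum_add_distrib]
    congr 1
    · rw [Finset.card_eq_sum_ones, Finset.sum_filter]
      refine Finset.sum_congr rfl fun c _ => by
        by_cases h : f c = true <;> simp [h]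
    · simp [Finset.card_univ]
  rw [hcard]
  simp only [Nat.add_sub_cancel]
  constructor
  · intro h
    have : 0 < Fintype.card {c : Fin m → ZMod 2 // f c = true} := by omega
    obtain ⟨⟨c, hc⟩⟩ := Fintype.card_pos_iff.mp this
    exact ⟨c, hc⟩
  · rintro ⟨c, hc⟩
    have : 0 < Fintype.card {c : Fin m → ZMod 2 // f c = true} :=
      Fintype.card_pos_iff.mpr ⟨⟨c, hc⟩⟩
    omega
end
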